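/- arXiv:1706.06545 — 6 statements merged into one kernel-verified Lean document; each statement's English description precedes it below -/
import Mathlib

section
/- In a stably Gelfand quantale Q, every two-sided element a (i.e., a·1 ≤ a and 1·a ≤ a) is idempotent: a·a = a. -/
/-- An involutive quantale: a complete lattice with an associative multiplication
distributing over arbitrary joins in each variable, and a join-preserving
involution that is an anti-automorphism of period 2. -/
class InvQuantale (Q : Type*) extends CompleteLattice Q, Semigroup Q, StarMul Q where
  mul_sSup : ∀ (a : Q) (S : Set Q), a * sSup S = ⨆ s ∈ S, a * s
  sSup_mul : ∀ (S : Set Q) (a : Q), sSup S * a = ⨆ s ∈ S, s * a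
  star_sSup : ∀ (S : Set Q), star (sSup S) = ⨆ s ∈ S, star s

/-- The set `I_b(Q)` of partial units relative to `b`. -/
def Ib {Q : Type*} [InvQuantale Q] (b : Q) : Set Q :=
  {a | star a * a ≤ b ∧ a * star a ≤ b ∧ a * b ≤ a ∧ b * a ≤ a}

/-- `Q` is stably Gelfand if `a a* a ≤ a` implies `a a* a = a`. -/
def IsStablyGelfand (Q : Type*) [InvQuantale Q] : Prop :=
  ∀ a : Q, a * star a * a ≤ a → a * star a * a = a

private lemma qmul_left {Q : Type*} [InvQuantale Q] {b c : Q} (a : Q) (hbc : b ≤ c) :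
    a * b ≤ a * c := by
  have h : a * sSup {b, c} = ⨆ s ∈ ({b, c} : Set Q), a * s := InvQuantale.mul_sSup a _
  have hs : sSup ({b, c} : Set Q) = c := by
    simp [sSup_pair, sup_eq_right.mpr hbc]
  rw [hs] at h
  rw [h]
  exact le_biSup (fun s => a * s) (Set.mem_insert b {c})

private lemma qmul_right {Q : Type*} [InvQuantale Q] {b c : Q} (a : Q) (hbc : b ≤ c) :
    b * a ≤ c * a := by
  have h : sSup {b, c} * a = ⨆ s ∈ ({b, c} : Set Q), s * a := InvQuantale.sSup_mul _ a
  have hs : sSup ({b, c} : Set Q) = c := by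
    simp [sSup_pair, sup_eq_right.mpr hbc]
  rw [hs] at h
  rw [h]
  exact le_biSup (fun s => s * a) (Set.mem_insert b {c})

theorem twoSided_idempotent {Q : Type*} [InvQuantale Q]
    (h : IsStablyGelfand Q) (a : Q) (h1 : a * ⊤ ≤ a) (h2 : ⊤ * a ≤ a) :
    a * a = a := by
  have key : a * star a * a ≤ a := by
    calc a * star a * a ≤ a * ⊤ * a := qmul_right a (qmul_left a le_top)
    _ ≤ a * a := qmul_right a h1
    _ ≤ a * ⊤ := qmul_left a le_top
    _ ≤ a := h1
  have heq := h a key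
  have hle : a ≤ a * a := by
    calc a = a * star a * a := heq.symm
    _ = a * (star a * a) := mul_assoc _ _ _
    _ ≤ a * (⊤ * a) := qmul_left a (qmul_right a le_top)
    _ ≤ a * a := qmul_left a h2
  have hge : a * a ≤ a := le_trans (qmul_left a le_top) h1
  exact le_antisymm hge hle
end

section
/- In a stably Gelfand quantale Q, every two-sided element is fixed by the involution: if a·1 ≤ a and 1·a ≤ a then a* = a. -/
lemma InvQuantale.mul_le_mul_right' {Q : Type*} [InvQuantale Q] {a b : Q} (hab : a ≤ b)
    (c : Q) : c * a ≤ c * b := by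
  have hb : sSup {a, b} = b := by simp [sSup_pair, sup_eq_right.mpr hab]
  have := InvQuantale.mul_sSup c ({a, b} : Set Q)
  rw [hb] at this
  rw [this]
  exact le_iSup₂ (f := fun s _ => c * s) a (Set.mem_insert a {b})

lemma InvQuantale.mul_le_mul_left' {Q : Type*} [InvQuantale Q] {a b : Q} (hab : a ≤ b)
    (c : Q) : a * c ≤ b * c := by
  have hb : sSup {a, b} = b := by simp [sSup_pair, sup_eq_right.mpr hab]
  have := InvQuantale.sSup_mul ({a, b} : Set Q) c
  rw [hb] at this
  rw [this]
  exact le_iSup₂ (f := fun s _ => s * c) a (Set.mem_insert a {b})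

lemma InvQuantale.star_mono {Q : Type*} [InvQuantale Q] {a b : Q} (hab : a ≤ b) :
    star a ≤ star b := by
  have hb : sSup {a, b} = b := by simp [sSup_pair, sup_eq_right.mpr hab]
  have := InvQuantale.star_sSup ({a, b} : Set Q)
  rw [hb] at this
  rw [this]
  exact le_iSup₂ (f := fun s _ => star s) a (Set.mem_insert a {b})

theorem twoSided_selfAdjoint {Q : Type*} [InvQuantale Q]
    (h : IsStablyGelfand Q) (a : Q) (h1 : a * ⊤ ≤ a) (h2 : ⊤ * a ≤ a) :
    star a = a := by
  have haa : a * a ≤ a := le_trans (InvQuantale.mul_le_mul_right' le_top a) h1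
  have hstar : a * star a ≤ a := le_trans (InvQuantale.mul_le_mul_right' le_top a) h1
  have hle : a * star a * a ≤ a := le_trans (InvQuantale.mul_le_mul_left' hstar a) haa
  have heq := h a hle
  -- a* = a* a a* ≤ ⊤ * a ≤ a
  have hstar_eq : star a = star a * a * star a := by
    conv_lhs => rw [← heq]
    rw [star_mul, star_mul, star_star, mul_assoc]
  have h3 : star a ≤ a := by
    rw [hstar_eq]
    calc star a * a * star a ≤ ⊤ * (a * star a) := by
          rw [mul_assoc]; exact InvQuantale.mul_le_mul_left' le_top _
      _ ≤ ⊤ * a := InvQuantale.mul_le_mul_right' hstar ⊤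
      _ ≤ a := h2
  have h4 : a ≤ star a := by
    have := InvQuantale.star_mono h3
    rwa [star_star] at this
  exact le_antisymm h3 h4
end

section
/- In a stably Gelfand quantale Q, the set of two-sided elements is closed under multiplication, and for two-sided elements a, b one has ab = a ∧ b. -/
section Aux
variable {Q : Type*} [InvQuantale Q]

lemma iq_mul_le_mul_left (a : Q) {c d : Q} (h : c ≤ d) : a * c ≤ a * d := by
  have : a * sSup {c, d} = ⨆ s ∈ ({c, d} : Set Q), a * s := InvQuantale.mul_sSup a {c, d}
  rw [sSup_pair, sup_eq_right.mpr h] at this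
  rw [this]
  exact le_iSup₂_of_le c (by simp) le_rfl

lemma iq_mul_le_mul_right (a : Q) {c d : Q} (h : c ≤ d) : c * a ≤ d * a := by
  have : sSup {c, d} * a = ⨆ s ∈ ({c, d} : Set Q), s * a := InvQuantale.sSup_mul {c, d} a
  rw [sSup_pair, sup_eq_right.mpr h] at this
  rw [this]
  exact le_iSup₂_of_le c (by simp) le_rfl

lemma iq_mul_le_mul {a b c d : Q} (h1 : a ≤ b) (h2 : c ≤ d) : a * c ≤ b * d :=
  le_trans (iq_mul_le_mul_left a h2) (iq_mul_le_mul_right d h1)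

end Aux

theorem twoSided_mul_eq_inf {Q : Type*} [InvQuantale Q]
    (h : IsStablyGelfand Q) (a b : Q)
    (ha1 : a * ⊤ ≤ a) (ha2 : ⊤ * a ≤ a) (hb1 : b * ⊤ ≤ b) (hb2 : ⊤ * b ≤ b) :
    (a * b * ⊤ ≤ a * b ∧ ⊤ * (a * b) ≤ a * b) ∧ a * b = a ⊓ b := by
  set c := a ⊓ b with hc
  have hca : c ≤ a := inf_le_left
  have hcb : c ≤ b := inf_le_right
  have hab_le_a : a * b ≤ a := le_trans (iq_mul_le_mul_left a le_top) ha1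
  have hab_le_b : a * b ≤ b := le_trans (iq_mul_le_mul_right b le_top) hb2
  have hct : c * ⊤ ≤ c := le_inf (le_trans (iq_mul_le_mul_right ⊤ hca) ha1)
    (le_trans (iq_mul_le_mul_right ⊤ hcb) hb1)
  have hgel : c * star c * c ≤ c := by
    calc c * star c * c = c * (star c * c) := mul_assoc _ _ _
    _ ≤ c * ⊤ := iq_mul_le_mul_left c le_top
    _ ≤ c := hct
  have heq := h c hgel
  have hle : c ≤ a * b := by
    calc c = c * star c * c := heq.symm
    _ ≤ a * b := iq_mul_le_mul (le_trans (le_trans (iq_mul_le_mul_left c le_top) hct) hca) hcb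
  refine ⟨⟨?_, ?_⟩, le_antisymm (le_inf hab_le_a hab_le_b) hle⟩
  · calc a * b * ⊤ = a * (b * ⊤) := mul_assoc _ _ _
    _ ≤ a * b := iq_mul_le_mul_left a hb1
  · calc ⊤ * (a * b) = ⊤ * a * b := (mul_assoc _ _ _).symm
    _ ≤ a * b := iq_mul_le_mul_right b ha2
end

section
/- Let Q be a stably Gelfand quantale and b ∈ Q a projection. Then the idempotents of the semigroup I_b(Q) are exactly the two-sided elements of the subquantale ↓b: an element f ∈ I_b(Q) satisfies f·f = f if and only if f·b ≤ f, b·f ≤ f, and f ≤ b. -/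
section Helpers
variable {Q : Type*} [InvQuantale Q]

lemma InvQuantale.mul_le_mul_left'_s7 {x y : Q} (hxy : x ≤ y) (a : Q) :
    a * x ≤ a * y := by
  have h1 : a * sSup {x, y} = ⨆ s ∈ ({x, y} : Set Q), a * s :=
    InvQuantale.mul_sSup a {x, y}
  have h2 : sSup ({x, y} : Set Q) = y := by
    rw [sSup_pair, sup_eq_right.mpr hxy]
  have h3 : (⨆ s ∈ ({x, y} : Set Q), a * s) = a * x ⊔ a * y := by
    rw [iSup_pair]
  rw [h2, h3] at h1
  exact h1.ge.trans' le_sup_left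

lemma InvQuantale.mul_le_mul_right'_s7 {x y : Q} (hxy : x ≤ y) (a : Q) :
    x * a ≤ y * a := by
  have h1 : sSup {x, y} * a = ⨆ s ∈ ({x, y} : Set Q), s * a :=
    InvQuantale.sSup_mul {x, y} a
  have h2 : sSup ({x, y} : Set Q) = y := by
    rw [sSup_pair, sup_eq_right.mpr hxy]
  have h3 : (⨆ s ∈ ({x, y} : Set Q), s * a) = x * a ⊔ y * a := by
    rw [iSup_pair]
  rw [h2, h3] at h1
  exact h1.ge.trans' le_sup_left

lemma InvQuantale.star_le_star' {x y : Q} (hxy : x ≤ y) :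
    star x ≤ star y := by
  have h1 : star (sSup {x, y}) = ⨆ s ∈ ({x, y} : Set Q), star s :=
    InvQuantale.star_sSup {x, y}
  have h2 : sSup ({x, y} : Set Q) = y := by
    rw [sSup_pair, sup_eq_right.mpr hxy]
  have h3 : (⨆ s ∈ ({x, y} : Set Q), star s) = star x ⊔ star y := by
    rw [iSup_pair]
  rw [h2, h3] at h1
  exact h1.ge.trans' le_sup_left

end Helpers

theorem Ib_idempotents_eq_twoSided_of_down {Q : Type*} [InvQuantale Q]
    (h : IsStablyGelfand Q) (b : Q) (hb : b * b = b) (hb' : star b = b)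
    (f : Q) (hf : f ∈ Ib b) :
    f * f = f ↔ (f * b ≤ f ∧ b * f ≤ f ∧ f ≤ b) := by
  obtain ⟨h1, h2, h3, h4⟩ := hf
  -- f f* f = f in both directions
  have hsg : f * star f * f = f := by
    apply h
    calc f * star f * f ≤ b * f := InvQuantale.mul_le_mul_right'_s7 h2 f
    _ ≤ f := h4
  constructor
  · intro hff
    refine ⟨h3, h4, ?_⟩
    have hstar : star f * star f = star f := by
      have := congrArg star hff
      rwa [star_mul] at this
    calc f = f * star f * f := hsg.symm
    _ = f * (star f * star f) * f := by rw [hstar]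
    _ = (f * star f) * (star f * f) := by rw [mul_assoc, mul_assoc, mul_assoc]
    _ ≤ b * (star f * f) := InvQuantale.mul_le_mul_right'_s7 h2 _
    _ ≤ b * b := InvQuantale.mul_le_mul_left'_s7 h1 b
    _ = b := hb
  · rintro ⟨-, -, hfb⟩
    have hfstar : star f ≤ b := hb' ▸ InvQuantale.star_le_star' hfb
    have hge : f ≤ f * f := by
      calc f = f * star f * f := hsg.symm
      _ ≤ f * b * f := InvQuantale.mul_le_mul_right'_s7 (InvQuantale.mul_le_mul_left'_s7 hfstar f) f
      _ ≤ f * f := InvQuantale.mul_le_mul_right'_s7 h3 f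
    have hle : f * f ≤ f := (InvQuantale.mul_le_mul_left'_s7 hfb f).trans h3
    exact le_antisymm hle hge
end

section
/- Let Q be a stably Gelfand quantale and b ∈ Q a projection. Then I_b(Q), with the multiplication of Q and with s ↦ s* as inverse operation, is an inverse semigroup: every s ∈ I_b(Q) satisfies s = ss*s, and idempotents commute. -/
namespace IbAux

variable {Q : Type*} [InvQuantale Q]

lemma mul_left_mono (a : Q) {x y : Q} (hxy : x ≤ y) : a * x ≤ a * y := by
  have h1 : a * sSup ({x, y} : Set Q) = ⨆ s ∈ ({x, y} : Set Q), a * s :=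
    InvQuantale.mul_sSup a {x, y}
  have h2 : sSup ({x, y} : Set Q) = y := by rw [sSup_pair, sup_eq_right.mpr hxy]
  rw [h2] at h1
  calc a * x ≤ ⨆ s ∈ ({x, y} : Set Q), a * s := le_biSup _ (Set.mem_insert _ _)
    _ = a * y := h1.symm

lemma mul_right_mono (a : Q) {x y : Q} (hxy : x ≤ y) : x * a ≤ y * a := by
  have h1 : sSup ({x, y} : Set Q) * a = ⨆ s ∈ ({x, y} : Set Q), s * a :=
    InvQuantale.sSup_mul {x, y} a
  have h2 : sSup ({x, y} : Set Q) = y := by rw [sSup_pair, sup_eq_right.mpr hxy]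
  rw [h2] at h1
  calc x * a ≤ ⨆ s ∈ ({x, y} : Set Q), s * a :=
      le_biSup (f := fun s => s * a) (Set.mem_insert _ _)
    _ = y * a := h1.symm

lemma mul_mono {x y z w : Q} (h1 : x ≤ y) (h2 : z ≤ w) : x * z ≤ y * w :=
  le_trans (mul_left_mono x h2) (mul_right_mono w h1)

lemma star_mono {x y : Q} (hxy : x ≤ y) : star x ≤ star y := by
  have h1 : star (sSup ({x, y} : Set Q)) = ⨆ s ∈ ({x, y} : Set Q), star s :=
    InvQuantale.star_sSup {x, y}
  have h2 : sSup ({x, y} : Set Q) = y := by rw [sSup_pair, sup_eq_right.mpr hxy]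
  rw [h2] at h1
  calc star x ≤ ⨆ s ∈ ({x, y} : Set Q), star s :=
      le_biSup (f := fun s => star s) (Set.mem_insert _ _)
    _ = star y := h1.symm

variable {b : Q}

lemma star_mem (hb' : star b = b) {s : Q} (hs : s ∈ Ib b) : star s ∈ Ib b := by
  obtain ⟨h1, h2, h3, h4⟩ := hs
  refine ⟨by rwa [star_star], by rwa [star_star], ?_, ?_⟩
  · have := star_mono h4
    rw [star_mul, hb'] at this; exact this
  · have := star_mono h3
    rw [star_mul, hb'] at this; exact this

lemma reg (h : IsStablyGelfand Q) {s : Q} (hs : s ∈ Ib b) : s * star s * s = s := by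
  apply h
  calc s * star s * s = s * (star s * s) := mul_assoc _ _ _
    _ ≤ s * b := mul_left_mono s hs.1
    _ ≤ s := hs.2.2.1

/-- Idempotents of `I_b` are self-adjoint. -/
lemma idem_star (h : IsStablyGelfand Q) (hb : b * b = b) (hb' : star b = b)
    {f : Q} (hf : f ∈ Ib b) (hff : f * f = f) : star f = f := by
  obtain ⟨h1, h2, h3, h4⟩ := hf
  have hsmem : star f ∈ Ib b := star_mem hb' ⟨h1, h2, h3, h4⟩
  have hreg : f * star f * f = f := reg h ⟨h1, h2, h3, h4⟩
  have hsidem : star f * star f = star f := by rw [← star_mul, hff]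
  -- f = (f f*) (f* f)
  have hpe : (f * star f) * (star f * f) = f := by
    calc (f * star f) * (star f * f) = f * (star f * star f) * f := by
          simp [mul_assoc]
      _ = f * star f * f := by rw [hsidem]
      _ = f := hreg
  have hfb : f ≤ b := by
    calc f = (f * star f) * (star f * f) := hpe.symm
      _ ≤ b * b := mul_mono h2 h1
      _ = b := hb
  have hfsb : star f ≤ b := by
    have := star_mono hfb; rwa [hb'] at this
  -- f f* ≤ f* and f* f ≤ f*
  have hp : f * star f ≤ star f :=
    le_trans (mul_right_mono (star f) hfb) hsmem.2.2.2
  have he : star f * f ≤ star f :=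
    le_trans (mul_left_mono (star f) hfb) hsmem.2.2.1
  have hle : f ≤ star f := by
    calc f = (f * star f) * (star f * f) := hpe.symm
      _ ≤ star f * star f := mul_mono hp he
      _ = star f := hsidem
  have hge : star f ≤ f := by
    have := star_mono hle; rwa [star_star] at this
  exact le_antisymm hge hle

end IbAux

theorem Ib_inverse_semigroup {Q : Type*} [InvQuantale Q]
    (h : IsStablyGelfand Q) (b : Q) (hb : b * b = b) (hb' : star b = b) :
    (∀ s ∈ Ib b, s * star s * s = s) ∧
      (∀ f ∈ Ib b, ∀ g ∈ Ib b, f * f = f → g * g = g → f * g = g * f) := by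
  constructor
  · exact fun s hs => IbAux.reg h hs
  · intro f hf g hg hff hgg
    have sf : star f = f := IbAux.idem_star h hb hb' hf hff
    have sg : star g = g := IbAux.idem_star h hb hb' hg hgg
    have hfb : f ≤ b := by have := hf.2.1; rw [sf, hff] at this; exact this
    have hgb : g ≤ b := by have := hg.2.1; rw [sg, hgg] at this; exact this
    have hstar_fg : star (f * g) = g * f := by rw [star_mul, sf, sg]
    have hgf_le : g * f ≤ b := by
      calc g * f ≤ b * b := IbAux.mul_mono hgb hfb
        _ = b := hb
    have e1 : (f * g) * (g * f) * (f * g) = f * ((g * g) * ((f * f) * g)) := by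
      simp [mul_assoc]
    rw [hgg, hff] at e1
    have e2 : f * (g * (f * g)) = (f * (g * f)) * g := by simp [mul_assoc]
    have hbound : (f * g) * star (f * g) * (f * g) ≤ f * g := by
      rw [hstar_fg, e1, e2]
      calc (f * (g * f)) * g ≤ (f * b) * g :=
            IbAux.mul_right_mono g (IbAux.mul_left_mono f hgf_le)
        _ ≤ f * g := IbAux.mul_right_mono g hf.2.2.1
    have hSG : (f * g) * star (f * g) * (f * g) = f * g := h _ hbound
    rw [hstar_fg, e1, e2] at hSG
    have hidem : (f * g) * (f * g) = f * g := by
      have e3 : (f * g) * (f * g) = f * (g * (f * g)) := by simp [mul_assoc]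
      rw [e3, e2, hSG]
    have hmem : f * g ∈ Ib b := by
      refine ⟨?_, ?_, ?_, ?_⟩
      · rw [hstar_fg]
        have e3 : (g * f) * (f * g) = (g * (f * f)) * g := by simp [mul_assoc]
        rw [e3, hff]
        calc (g * f) * g ≤ (g * b) * g :=
              IbAux.mul_right_mono g (IbAux.mul_left_mono g hfb)
          _ ≤ g * g := IbAux.mul_right_mono g hg.2.2.1
          _ = g := hgg
          _ ≤ b := hgb
      · rw [hstar_fg]
        have e3 : (f * g) * (g * f) = (f * (g * g)) * f := by simp [mul_assoc]
        rw [e3, hgg]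
        calc (f * g) * f ≤ (f * b) * f :=
              IbAux.mul_right_mono f (IbAux.mul_left_mono f hgb)
          _ ≤ f * f := IbAux.mul_right_mono f hf.2.2.1
          _ = f := hff
          _ ≤ b := hfb
      · calc (f * g) * b = f * (g * b) := mul_assoc _ _ _
          _ ≤ f * g := IbAux.mul_left_mono f hg.2.2.1
      · calc b * (f * g) = (b * f) * g := (mul_assoc _ _ _).symm
          _ ≤ f * g := IbAux.mul_right_mono g hf.2.2.2
    have := IbAux.idem_star h hb hb' hmem hidem
    rw [hstar_fg] at this
    exact this.symm
end

section
/- Let X be a set, Q = P(X × X), R an equivalence relation on a subset Y ⊆ X, and Q' = P(Y/R × Y/R) the quantale of binary relations on the quotient set. Then the inverse semigroup I_R(Q) = {U : U°U ⊆ R, UU° ⊆ R, UR ⊆ U, RU ⊆ U} is isomorphic to the inverse semigroup of partial bijections on Y/R. -/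
/-- Relational composition: `rcomp R S = {(z,x) | ∃ y, (z,y) ∈ R ∧ (y,x) ∈ S}`. -/
def rcomp {X : Type*} (R S : Set (X × X)) : Set (X × X) :=
  {p | ∃ y, (p.1, y) ∈ R ∧ (y, p.2) ∈ S}

/-- Relational converse. -/
def rconv {X : Type*} (R : Set (X × X)) : Set (X × X) :=
  {p | (p.2, p.1) ∈ R}

/-- The setoid on a subset induced by an equivalence relation on it. -/
def projSetoid {X : Type*} (Y : Set X) (R : Set (X × X))
    (hrefl : ∀ y ∈ Y, (y, y) ∈ R)
    (hsymm : ∀ p ∈ R, (p.2, p.1) ∈ R)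
    (htrans : ∀ x y z : X, (x, y) ∈ R → (y, z) ∈ R → (x, z) ∈ R) : Setoid Y :=
  ⟨fun a b => ((a : X), (b : X)) ∈ R,
    ⟨fun a => hrefl a a.2, fun h => hsymm _ h, fun h1 h2 => htrans _ _ _ h1 h2⟩⟩

theorem IR_iso_partial_bijections_on_quotient {X : Type*} (Y : Set X) (R : Set (X × X))
    (hsub : R ⊆ Y ×ˢ Y)
    (hrefl : ∀ y ∈ Y, (y, y) ∈ R)
    (hsymm : ∀ p ∈ R, (p.2, p.1) ∈ R)
    (htrans : ∀ x y z : X, (x, y) ∈ R → (y, z) ∈ R → (x, z) ∈ R) :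
    ∃ e : Set (X × X) →
        Set (Quotient (projSetoid Y R hrefl hsymm htrans) ×
             Quotient (projSetoid Y R hrefl hsymm htrans)),
      Set.BijOn e
        {U | rcomp (rconv U) U ⊆ R ∧ rcomp U (rconv U) ⊆ R ∧
             rcomp U R ⊆ U ∧ rcomp R U ⊆ U}
        {V | rcomp (rconv V) V ⊆ {p | p.1 = p.2} ∧
             rcomp V (rconv V) ⊆ {p | p.1 = p.2}} ∧
      ∀ U ∈ {U | rcomp (rconv U) U ⊆ R ∧ rcomp U (rconv U) ⊆ R ∧
             rcomp U R ⊆ U ∧ rcomp R U ⊆ U},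
        ∀ U' ∈ {U | rcomp (rconv U) U ⊆ R ∧ rcomp U (rconv U) ⊆ R ∧
             rcomp U R ⊆ U ∧ rcomp R U ⊆ U},
          e (rcomp U U') = rcomp (e U) (e U') := by
  classical
  set s := projSetoid Y R hrefl hsymm htrans with hs
  let q : ∀ x : X, x ∈ Y → Quotient s := fun x hx => Quotient.mk s ⟨x, hx⟩
  have hq : ∀ x hx y hy, q x hx = q y hy ↔ (x, y) ∈ R := by
    intro x hx y hy
    exact ⟨fun h => Quotient.exact h, fun h => Quotient.sound h⟩
  let e : Set (X × X) → Set (Quotient s × Quotient s) := fun U =>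
    {p | ∃ (x : X) (y : X) (hx : x ∈ Y) (hy : y ∈ Y),
      (x, y) ∈ U ∧ p.1 = q x hx ∧ p.2 = q y hy}
  have he : ∀ U (a b : Quotient s), (a, b) ∈ e U ↔
      ∃ (x : X) (y : X) (hx : x ∈ Y) (hy : y ∈ Y),
        (x, y) ∈ U ∧ a = q x hx ∧ b = q y hy := fun _ _ _ => Iff.rfl
  set D := {U : Set (X × X) | rcomp (rconv U) U ⊆ R ∧ rcomp U (rconv U) ⊆ R ∧
             rcomp U R ⊆ U ∧ rcomp R U ⊆ U} with hD
  -- key: for U ∈ D, e U = e U' (U' ∈ D) forces U ⊆ U'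
  have key : ∀ U ∈ D, ∀ U' ∈ D, e U ⊆ e U' → U ⊆ U' := by
    rintro U ⟨h1, h2, h3, h4⟩ U' ⟨h1', h2', h3', h4'⟩ hsubE
    rintro ⟨x, y⟩ hxy
    have hx : x ∈ Y := (hsub (h2 (show (x, x) ∈ rcomp U (rconv U) from ⟨y, hxy, hxy⟩))).1
    have hy : y ∈ Y := (hsub (h1 (show (y, y) ∈ rcomp (rconv U) U from ⟨x, hxy, hxy⟩))).1
    have : (q x hx, q y hy) ∈ e U' :=
      hsubE (show (q x hx, q y hy) ∈ e U from ⟨x, y, hx, hy, hxy, rfl, rfl⟩)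
    obtain ⟨x', y', hx', hy', hxy', ha, hb⟩ := (he U' _ _).1 this
    have hxx' : (x, x') ∈ R := (hq x hx x' hx').1 ha
    have hyy' : (y', y) ∈ R := hsymm _ ((hq y hy y' hy').1 hb)
    have h5 : (x, y') ∈ U' := h4' (show (x, y') ∈ rcomp R U' from ⟨x', hxx', hxy'⟩)
    exact h3' (show (x, y) ∈ rcomp U' R from ⟨y', h5, hyy'⟩)
  refine ⟨e, ⟨?_, ?_, ?_⟩, ?_⟩
  · -- maps into
    rintro U ⟨h1, h2, h3, h4⟩
    constructor
    · rintro ⟨a, b⟩ ⟨c, hca, hcb⟩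
      obtain ⟨x, y, hx, hy, hxy, hc1, ha⟩ := (he U c a).1 hca
      obtain ⟨x', y', hx', hy', hxy', hc2, hb⟩ := (he U c b).1 hcb
      have hxx' : (x, x') ∈ R := (hq x hx x' hx').1 (hc1.symm.trans hc2)
      have hxy'2 : (x, y') ∈ U := h4 (show (x, y') ∈ rcomp R U from ⟨x', hxx', hxy'⟩)
      have hyy' : (y, y') ∈ R := h1 (show (y, y') ∈ rcomp (rconv U) U from ⟨x, hxy, hxy'2⟩)
      show a = b
      exact ha.trans (((hq y hy y' hy').2 hyy').trans hb.symm)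
    · rintro ⟨a, b⟩ ⟨c, hac, hbc⟩
      obtain ⟨x, y, hx, hy, hxy, ha, hc1⟩ := (he U a c).1 hac
      obtain ⟨x', y', hx', hy', hxy', hb, hc2⟩ := (he U b c).1 hbc
      have hyy' : (y, y') ∈ R := (hq y hy y' hy').1 (hc1.symm.trans hc2)
      have hxy2 : (x, y') ∈ U := h3 (show (x, y') ∈ rcomp U R from ⟨y, hxy, hyy'⟩)
      have hxx' : (x, x') ∈ R := h2 (show (x, x') ∈ rcomp U (rconv U) from ⟨y', hxy2, hxy'⟩)
      show a = b
      exact ha.trans (((hq x hx x' hx').2 hxx').trans hb.symm)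
  · -- injective
    intro U hU U' hU' hEq
    exact Set.Subset.antisymm (key U hU U' hU' hEq.le) (key U' hU' U hU hEq.ge)
  · -- surjective
    rintro V ⟨hv1, hv2⟩
    refine ⟨{p | ∃ (hx : p.1 ∈ Y) (hy : p.2 ∈ Y), (q p.1 hx, q p.2 hy) ∈ V}, ⟨?_, ?_, ?_, ?_⟩, ?_⟩
    · rintro ⟨a, b⟩ ⟨c, hca, hcb⟩
      obtain ⟨hc, ha, hV1⟩ := hca
      obtain ⟨hc', hb, hV2⟩ := hcb
      have hcc : q c hc' = q c hc := (hq c hc' c hc).2 (hrefl c hc)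
      have : q a ha = q b hb :=
        hv1 (show (q a ha, q b hb) ∈ rcomp (rconv V) V from
          ⟨q c hc, hV1, hcc ▸ hV2⟩)
      exact (hq a ha b hb).1 this
    · rintro ⟨a, b⟩ ⟨c, hac, hbc⟩
      obtain ⟨ha, hc, hV1⟩ := hac
      obtain ⟨hb, hc', hV2⟩ := hbc
      have hcc : q c hc' = q c hc := (hq c hc' c hc).2 (hrefl c hc)
      have : q a ha = q b hb :=
        hv2 (show (q a ha, q b hb) ∈ rcomp V (rconv V) from
          ⟨q c hc, hV1, hcc ▸ hV2⟩)
      exact (hq a ha b hb).1 this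
    · rintro ⟨a, b⟩ ⟨c, hac, hcb⟩
      obtain ⟨ha, hc, hV1⟩ := hac
      have hb : b ∈ Y := (hsub hcb).2
      refine ⟨ha, hb, ?_⟩
      have : q c hc = q b hb := (hq c hc b hb).2 hcb
      exact this ▸ hV1
    · rintro ⟨a, b⟩ ⟨c, hac, hcb⟩
      obtain ⟨hc, hb, hV1⟩ := hcb
      have ha : a ∈ Y := (hsub hac).1
      refine ⟨ha, hb, ?_⟩
      have : q c hc = q a ha := (hq c hc a ha).2 (hsymm _ hac)
      exact this ▸ hV1
    · ext ⟨a, b⟩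
      constructor
      · rintro h
        obtain ⟨x, y, hx, hy, ⟨hx', hy', hV⟩, ha, hb⟩ := (he _ a b).1 h
        have e1 : q x hx' = q x hx := (hq x hx' x hx).2 (hrefl x hx)
        have e2 : q y hy' = q y hy := (hq y hy' y hy).2 (hrefl y hy)
        have : (q x hx, q y hy) ∈ V := e1 ▸ e2 ▸ hV
        have hab : (a, b) = (q x hx, q y hy) := by rw [ha, hb]
        rw [hab]; exact this
      · intro hab
        obtain ⟨⟨x, hx⟩, ha⟩ := Quotient.exists_rep a
        obtain ⟨⟨y, hy⟩, hb⟩ := Quotient.exists_rep b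
        refine (he _ a b).2 ⟨x, y, hx, hy, ⟨hx, hy, ?_⟩, ha.symm, hb.symm⟩
        have : (q x hx, q y hy) = (a, b) := by
          simp only [q]; rw [ha, hb]
        rw [this]; exact hab
  · -- homomorphism
    rintro U ⟨h1, h2, h3, h4⟩ U' ⟨h1', h2', h3', h4'⟩
    ext ⟨a, c⟩
    constructor
    · intro h
      obtain ⟨x, z, hx, hz, ⟨y, hxy, hyz⟩, ha, hc⟩ := (he _ a c).1 h
      have hy : y ∈ Y :=
        (hsub (h1 (show (y, y) ∈ rcomp (rconv U) U from ⟨x, hxy, hxy⟩))).1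
      exact ⟨q y hy, (he U a _).2 ⟨x, y, hx, hy, hxy, ha, rfl⟩,
        (he U' _ c).2 ⟨y, z, hy, hz, hyz, rfl, hc⟩⟩
    · rintro ⟨b, hab, hbc⟩
      obtain ⟨x, y, hx, hy, hxy, ha, hb⟩ := (he U a b).1 hab
      obtain ⟨y', z, hy', hz, hyz, hb', hc⟩ := (he U' b c).1 hbc
      have hyy' : (y, y') ∈ R := (hq y hy y' hy').1 (hb.symm.trans hb')
      have hxy' : (x, y') ∈ U := h3 (show (x, y') ∈ rcomp U R from ⟨y, hxy, hyy'⟩)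
      exact (he _ a c).2 ⟨x, z, hx, hz, ⟨y', hxy', hyz⟩, ha, hc⟩
end
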